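/- Let v : ℝ × ℝ → ℝ be a smooth function of (x,t) with v_xx(x,t) ≠ 0 for all (x,t), satisfying the evolution equation v_t = −v_x²/v_xx. Define η : ℝ × ℝ → ℝ by η = 2 v_x³ v_xxx / v_xx³ − 3 v_x² / v_xx. Then η satisfies the linearized equation ∂η/∂t = ( −2 v_x/v_xx )·∂η/∂x + ( v_x²/v_xx² )·∂²η/∂x² at every point (x,t). -/

import Mathlib

/-- Partial derivative with respect to the first (space) variable. -/
noncomputable def pdx (f : ℝ × ℝ → ℝ) : ℝ × ℝ → ℝ :=
  fun p => deriv (fun x => f (x, p.2)) p.1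

/-- Partial derivative with respect to the second (time) variable. -/
noncomputable def pdt (f : ℝ × ℝ → ℝ) : ℝ × ℝ → ℝ :=
  fun p => deriv (fun t => f (p.1, t)) p.2

lemma le1 : (1 : WithTop ℕ∞) ≤ ((⊤ : ℕ∞) : WithTop ℕ∞) := by
  exact_mod_cast (le_top : (1:ℕ∞) ≤ ⊤)

lemma letop : ((⊤ : ℕ∞) : WithTop ℕ∞) + 1 ≤ ((⊤ : ℕ∞) : WithTop ℕ∞) := by
  exact_mod_cast (by simp : (⊤:ℕ∞) + 1 ≤ ⊤)

lemma sliceX_hasDerivAt {f : ℝ × ℝ → ℝ} (hf : ContDiff ℝ (⊤ : ℕ∞) f) (p : ℝ × ℝ) :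
    HasDerivAt (fun x => f (x, p.2)) (pdx f p) p.1 := by
  have h : Differentiable ℝ (fun x : ℝ => f (x, p.2)) :=
    (hf.comp (contDiff_id.prodMk contDiff_const)).differentiable (by simp)
  exact (h p.1).hasDerivAt

lemma sliceT_hasDerivAt {f : ℝ × ℝ → ℝ} (hf : ContDiff ℝ (⊤ : ℕ∞) f) (p : ℝ × ℝ) :
    HasDerivAt (fun t => f (p.1, t)) (pdt f p) p.2 := by
  have h : Differentiable ℝ (fun t : ℝ => f (p.1, t)) :=
    (hf.comp (contDiff_const.prodMk contDiff_id)).differentiable (by simp)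
  exact (h p.2).hasDerivAt

lemma pdx_eq_fderiv {f : ℝ × ℝ → ℝ} (hf : ContDiff ℝ (⊤ : ℕ∞) f) (p : ℝ × ℝ) :
    pdx f p = fderiv ℝ f p ((1 : ℝ), (0 : ℝ)) := by
  have hin : HasDerivAt (fun x : ℝ => (x, p.2)) ((1 : ℝ), (0 : ℝ)) p.1 :=
    (hasDerivAt_id p.1).prodMk (hasDerivAt_const p.1 p.2)
  have hF : HasFDerivAt f (fderiv ℝ f p) p :=
    ((hf.differentiable (by simp)) p).hasFDerivAt
  have hF' : HasFDerivAt f (fderiv ℝ f p) ((fun x : ℝ => (x, p.2)) p.1) := by simpa using hF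
  have := hF'.comp_hasDerivAt p.1 hin
  exact this.deriv

lemma pdt_eq_fderiv {f : ℝ × ℝ → ℝ} (hf : ContDiff ℝ (⊤ : ℕ∞) f) (p : ℝ × ℝ) :
    pdt f p = fderiv ℝ f p ((0 : ℝ), (1 : ℝ)) := by
  have hin : HasDerivAt (fun t : ℝ => (p.1, t)) ((0 : ℝ), (1 : ℝ)) p.2 :=
    (hasDerivAt_const p.2 p.1).prodMk (hasDerivAt_id p.2)
  have hF : HasFDerivAt f (fderiv ℝ f p) p :=
    ((hf.differentiable (by simp)) p).hasFDerivAt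
  have hF' : HasFDerivAt f (fderiv ℝ f p) ((fun t : ℝ => (p.1, t)) p.2) := by simpa using hF
  have := hF'.comp_hasDerivAt p.2 hin
  exact this.deriv

lemma pdx_contDiff {f : ℝ × ℝ → ℝ} (hf : ContDiff ℝ (⊤ : ℕ∞) f) :
    ContDiff ℝ (⊤ : ℕ∞) (pdx f) := by
  have : (pdx f) = fun p => fderiv ℝ f p ((1 : ℝ), (0 : ℝ)) :=
    funext fun p => pdx_eq_fderiv hf p
  rw [this]
  exact (hf.fderiv_right letop).clm_apply contDiff_const

lemma pdt_contDiff {f : ℝ × ℝ → ℝ} (hf : ContDiff ℝ (⊤ : ℕ∞) f) :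
    ContDiff ℝ (⊤ : ℕ∞) (pdt f) := by
  have : (pdt f) = fun p => fderiv ℝ f p ((0 : ℝ), (1 : ℝ)) :=
    funext fun p => pdt_eq_fderiv hf p
  rw [this]
  exact (hf.fderiv_right letop).clm_apply contDiff_const

lemma pdt_pdx_comm {f : ℝ × ℝ → ℝ} (hf : ContDiff ℝ (⊤ : ℕ∞) f) :
    pdt (pdx f) = pdx (pdt f) := by
  funext p
  have hpx := pdx_contDiff hf
  have hpt := pdt_contDiff hf
  rw [pdt_eq_fderiv hpx p, pdx_eq_fderiv hpt p]
  have hfd : ∀ q, (pdx f) q = fderiv ℝ f q ((1:ℝ),(0:ℝ)) := fun q => pdx_eq_fderiv hf q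
  have hft : ∀ q, (pdt f) q = fderiv ℝ f q ((0:ℝ),(1:ℝ)) := fun q => pdt_eq_fderiv hf q
  have hdf : Differentiable ℝ (fderiv ℝ f) :=
    (hf.fderiv_right letop).differentiable (by simp)
  have h1 : fderiv ℝ (pdx f) p = (fderiv ℝ (fderiv ℝ f) p).flip ((1:ℝ),(0:ℝ)) := by
    have : pdx f = fun q => fderiv ℝ f q ((1:ℝ),(0:ℝ)) := funext hfd
    rw [this, fderiv_clm_apply (hdf p) (differentiableAt_const _)]
    simp
  have h2 : fderiv ℝ (pdt f) p = (fderiv ℝ (fderiv ℝ f) p).flip ((0:ℝ),(1:ℝ)) := by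
    have : pdt f = fun q => fderiv ℝ f q ((0:ℝ),(1:ℝ)) := funext hft
    rw [this, fderiv_clm_apply (hdf p) (differentiableAt_const _)]
    simp
  rw [h1, h2]
  simp only [ContinuousLinearMap.flip_apply]
  have hsymm : IsSymmSndFDerivAt ℝ f p := by
    apply (hf.contDiffAt).isSymmSndFDerivAt
    rw [minSmoothness_of_isRCLikeNormedField]
    exact WithTop.coe_le_coe.mpr (le_top : (2:ℕ∞) ≤ ⊤)
  exact (hsymm _ _).symm

lemma sliceX' {f : ℝ × ℝ → ℝ} (hf : ContDiff ℝ (⊤ : ℕ∞) f) (x t : ℝ) :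
    HasDerivAt (fun x' => f (x', t)) (pdx f (x, t)) x := sliceX_hasDerivAt hf (x, t)

lemma sliceT' {f : ℝ × ℝ → ℝ} (hf : ContDiff ℝ (⊤ : ℕ∞) f) (x t : ℝ) :
    HasDerivAt (fun t' => f (x, t')) (pdt f (x, t)) t := sliceT_hasDerivAt hf (x, t)

section main
variable {v : ℝ × ℝ → ℝ}

lemma F1 (hv : ContDiff ℝ (⊤ : ℕ∞) v)
    (hvxx : ∀ p : ℝ × ℝ, pdx (pdx v) p ≠ 0)
    (heq : ∀ p : ℝ × ℝ, pdt v p = -(pdx v p) ^ 2 / pdx (pdx v) p) :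
    pdt (pdx v) = fun q => -2 * pdx v q + (pdx v q) ^ 2 * pdx (pdx (pdx v)) q / (pdx (pdx v) q) ^ 2 := by
  rw [pdt_pdx_comm hv]
  have hpt : pdt v = fun q => -(pdx v q) ^ 2 / pdx (pdx v) q := funext heq
  rw [hpt]
  funext p
  obtain ⟨x, t⟩ := p
  have hb0 : pdx (pdx v) (x, t) ≠ 0 := hvxx (x, t)
  have ha := sliceX' (pdx_contDiff hv) x t
  have hb := sliceX' (pdx_contDiff (pdx_contDiff hv)) x t
  have h := ((ha.pow 2).neg).div hb hb0
  refine (h.deriv).trans ?_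
  simp only [Pi.add_apply, Pi.sub_apply, Pi.mul_apply, Pi.div_apply, Pi.pow_apply, Pi.neg_apply]
  norm_num
  field_simp

lemma F2 (hv : ContDiff ℝ (⊤ : ℕ∞) v)
    (hvxx : ∀ p : ℝ × ℝ, pdx (pdx v) p ≠ 0)
    (heq : ∀ p : ℝ × ℝ, pdt v p = -(pdx v p) ^ 2 / pdx (pdx v) p) :
    pdt (pdx (pdx v)) = fun q =>
      -2 * pdx (pdx v) q + (2 * pdx v q * pdx (pdx v) q * pdx (pdx (pdx v)) q + (pdx v q) ^ 2 * pdx (pdx (pdx (pdx v))) q) / (pdx (pdx v) q) ^ 2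
        - 2 * (pdx v q) ^ 2 * (pdx (pdx (pdx v)) q) ^ 2 / (pdx (pdx v) q) ^ 3 := by
  rw [pdt_pdx_comm (pdx_contDiff hv), F1 hv hvxx heq]
  funext p
  obtain ⟨x, t⟩ := p
  have hb0 : pdx (pdx v) (x, t) ≠ 0 := hvxx (x, t)
  have ha := sliceX' (pdx_contDiff hv) x t
  have hb := sliceX' (pdx_contDiff (pdx_contDiff hv)) x t
  have hc := sliceX' (pdx_contDiff (pdx_contDiff (pdx_contDiff hv))) x t
  have h := (ha.const_mul (-2)).add
    (((ha.pow 2).mul hc).div (hb.pow 2) (pow_ne_zero 2 hb0))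
  refine (h.deriv).trans ?_
  simp only [Pi.add_apply, Pi.sub_apply, Pi.mul_apply, Pi.div_apply, Pi.pow_apply, Pi.neg_apply]
  norm_num
  field_simp
  ring

lemma F3 (hv : ContDiff ℝ (⊤ : ℕ∞) v)
    (hvxx : ∀ p : ℝ × ℝ, pdx (pdx v) p ≠ 0)
    (heq : ∀ p : ℝ × ℝ, pdt v p = -(pdx v p) ^ 2 / pdx (pdx v) p) :
    pdt (pdx (pdx (pdx v))) = fun q =>
      -2 * pdx (pdx (pdx v)) q + (2 * (pdx (pdx v) q) ^ 2 * pdx (pdx (pdx v)) q + 2 * pdx v q * (pdx (pdx (pdx v)) q) ^ 2 + 4 * pdx v q * pdx (pdx v) q * pdx (pdx (pdx (pdx v))) q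
          + (pdx v q) ^ 2 * pdx (pdx (pdx (pdx (pdx v)))) q) / (pdx (pdx v) q) ^ 2
        - (8 * pdx v q * pdx (pdx v) q * (pdx (pdx (pdx v)) q) ^ 2 + 6 * (pdx v q) ^ 2 * pdx (pdx (pdx v)) q * pdx (pdx (pdx (pdx v))) q) / (pdx (pdx v) q) ^ 3
        + 6 * (pdx v q) ^ 2 * (pdx (pdx (pdx v)) q) ^ 3 / (pdx (pdx v) q) ^ 4 := by
  rw [pdt_pdx_comm (pdx_contDiff (pdx_contDiff hv)), F2 hv hvxx heq]
  funext p
  obtain ⟨x, t⟩ := p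
  have hb0 : pdx (pdx v) (x, t) ≠ 0 := hvxx (x, t)
  have ha := sliceX' (pdx_contDiff hv) x t
  have hb := sliceX' (pdx_contDiff (pdx_contDiff hv)) x t
  have hc := sliceX' (pdx_contDiff (pdx_contDiff (pdx_contDiff hv))) x t
  have hd := sliceX' (pdx_contDiff (pdx_contDiff (pdx_contDiff (pdx_contDiff hv)))) x t
  have h := ((hb.const_mul (-2)).add
      (((((ha.const_mul 2).mul hb).mul hc).add ((ha.pow 2).mul hd)).div
        (hb.pow 2) (pow_ne_zero 2 hb0))).sub
      ((((ha.pow 2).const_mul 2).mul (hc.pow 2)).div (hb.pow 3) (pow_ne_zero 3 hb0))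
  refine (h.deriv).trans ?_
  simp only [Pi.add_apply, Pi.sub_apply, Pi.mul_apply, Pi.div_apply, Pi.pow_apply, Pi.neg_apply]
  norm_num
  field_simp
  ring

lemma F4 (hv : ContDiff ℝ (⊤ : ℕ∞) v)
    (hvxx : ∀ p : ℝ × ℝ, pdx (pdx v) p ≠ 0) :
    pdx (fun p => 2 * (pdx v p) ^ 3 * pdx (pdx (pdx v)) p / (pdx (pdx v) p) ^ 3
        - 3 * (pdx v p) ^ 2 / pdx (pdx v) p)
      = fun q => 9 * (pdx v q) ^ 2 * pdx (pdx (pdx v)) q / (pdx (pdx v) q) ^ 2 + 2 * (pdx v q) ^ 3 * pdx (pdx (pdx (pdx v))) q / (pdx (pdx v) q) ^ 3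
          - 6 * (pdx v q) ^ 3 * (pdx (pdx (pdx v)) q) ^ 2 / (pdx (pdx v) q) ^ 4 - 6 * pdx v q := by
  funext p
  obtain ⟨x, t⟩ := p
  have hb0 : pdx (pdx v) (x, t) ≠ 0 := hvxx (x, t)
  have ha := sliceX' (pdx_contDiff hv) x t
  have hb := sliceX' (pdx_contDiff (pdx_contDiff hv)) x t
  have hc := sliceX' (pdx_contDiff (pdx_contDiff (pdx_contDiff hv))) x t
  have h := ((((ha.pow 3).const_mul 2).mul hc).div (hb.pow 3) (pow_ne_zero 3 hb0)).sub
    (((ha.pow 2).const_mul 3).div hb hb0)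
  refine (h.deriv).trans ?_
  simp only [Pi.add_apply, Pi.sub_apply, Pi.mul_apply, Pi.div_apply, Pi.pow_apply, Pi.neg_apply]
  norm_num
  field_simp
  ring

lemma F5 (hv : ContDiff ℝ (⊤ : ℕ∞) v)
    (hvxx : ∀ p : ℝ × ℝ, pdx (pdx v) p ≠ 0) :
    pdx (fun q => 9 * (pdx v q) ^ 2 * pdx (pdx (pdx v)) q / (pdx (pdx v) q) ^ 2 + 2 * (pdx v q) ^ 3 * pdx (pdx (pdx (pdx v))) q / (pdx (pdx v) q) ^ 3
          - 6 * (pdx v q) ^ 3 * (pdx (pdx (pdx v)) q) ^ 2 / (pdx (pdx v) q) ^ 4 - 6 * pdx v q)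
      = fun q => (-6 * (pdx (pdx v) q) ^ 6 + 18 * pdx v q * (pdx (pdx v) q) ^ 4 * pdx (pdx (pdx v)) q
          - 36 * (pdx v q) ^ 2 * (pdx (pdx v) q) ^ 2 * (pdx (pdx (pdx v)) q) ^ 2 + 15 * (pdx v q) ^ 2 * (pdx (pdx v) q) ^ 3 * pdx (pdx (pdx (pdx v))) q
          + 24 * (pdx v q) ^ 3 * (pdx (pdx (pdx v)) q) ^ 3 - 18 * (pdx v q) ^ 3 * pdx (pdx v) q * pdx (pdx (pdx v)) q * pdx (pdx (pdx (pdx v))) q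
          + 2 * (pdx v q) ^ 3 * (pdx (pdx v) q) ^ 2 * pdx (pdx (pdx (pdx (pdx v)))) q) / (pdx (pdx v) q) ^ 5 := by
  funext p
  obtain ⟨x, t⟩ := p
  have hb0 : pdx (pdx v) (x, t) ≠ 0 := hvxx (x, t)
  have ha := sliceX' (pdx_contDiff hv) x t
  have hb := sliceX' (pdx_contDiff (pdx_contDiff hv)) x t
  have hc := sliceX' (pdx_contDiff (pdx_contDiff (pdx_contDiff hv))) x t
  have hd := sliceX' (pdx_contDiff (pdx_contDiff (pdx_contDiff (pdx_contDiff hv)))) x t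
  have h := ((((((ha.pow 2).const_mul 9).mul hc).div (hb.pow 2) (pow_ne_zero 2 hb0)).add
      ((((ha.pow 3).const_mul 2).mul hd).div (hb.pow 3) (pow_ne_zero 3 hb0))).sub
      ((((ha.pow 3).const_mul 6).mul (hc.pow 2)).div (hb.pow 4) (pow_ne_zero 4 hb0))).sub
      (ha.const_mul 6)
  refine (h.deriv).trans ?_
  simp only [Pi.add_apply, Pi.sub_apply, Pi.mul_apply, Pi.div_apply, Pi.pow_apply, Pi.neg_apply]
  norm_num
  field_simp
  ring

lemma F6 (hv : ContDiff ℝ (⊤ : ℕ∞) v)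
    (hvxx : ∀ p : ℝ × ℝ, pdx (pdx v) p ≠ 0)
    (heq : ∀ p : ℝ × ℝ, pdt v p = -(pdx v p) ^ 2 / pdx (pdx v) p) :
    pdt (fun p => 2 * (pdx v p) ^ 3 * pdx (pdx (pdx v)) p / (pdx (pdx v) p) ^ 3
        - 3 * (pdx v p) ^ 2 / pdx (pdx v) p)
      = fun q => (6 * (pdx v q) ^ 2 * (pdx (pdx v) q) ^ 6 - 24 * (pdx v q) ^ 4 * (pdx (pdx v) q) ^ 2 * (pdx (pdx (pdx v)) q) ^ 2
          + 11 * (pdx v q) ^ 4 * (pdx (pdx v) q) ^ 3 * pdx (pdx (pdx (pdx v))) q + 24 * (pdx v q) ^ 5 * (pdx (pdx (pdx v)) q) ^ 3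
          - 18 * (pdx v q) ^ 5 * pdx (pdx v) q * pdx (pdx (pdx v)) q * pdx (pdx (pdx (pdx v))) q + 2 * (pdx v q) ^ 5 * (pdx (pdx v) q) ^ 2 * pdx (pdx (pdx (pdx (pdx v)))) q)
          / (pdx (pdx v) q) ^ 7 := by
  funext p
  obtain ⟨x, t⟩ := p
  have hb0 : pdx (pdx v) (x, t) ≠ 0 := hvxx (x, t)
  have ha := sliceT' (pdx_contDiff hv) x t
  have hb := sliceT' (pdx_contDiff (pdx_contDiff hv)) x t
  have hc := sliceT' (pdx_contDiff (pdx_contDiff (pdx_contDiff hv))) x t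
  have h := ((((ha.pow 3).const_mul 2).mul hc).div (hb.pow 3) (pow_ne_zero 3 hb0)).sub
    (((ha.pow 2).const_mul 3).div hb hb0)
  refine (h.deriv).trans ?_
  simp only [Pi.add_apply, Pi.sub_apply, Pi.mul_apply, Pi.div_apply, Pi.pow_apply, Pi.neg_apply]
  norm_num
  simp only [F1 hv hvxx heq, F2 hv hvxx heq, F3 hv hvxx heq]
  field_simp
  ring

end main

/-- Subcase 1.3a: for a solution of `v_t = −v_x²/v_xx`, the function
`η = 2 v_x³ v_xxx / v_xx³ − 3 v_x² / v_xx` satisfies the linearized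
(Lie–Bäcklund symmetry) equation. -/
theorem subcase13a_third_order_symmetry
    (v : ℝ × ℝ → ℝ) (hv : ContDiff ℝ (⊤ : ℕ∞) v)
    (hvxx : ∀ p : ℝ × ℝ, pdx (pdx v) p ≠ 0)
    (heq : ∀ p : ℝ × ℝ, pdt v p = -(pdx v p) ^ 2 / pdx (pdx v) p)
    (η : ℝ × ℝ → ℝ)
    (hη : η = fun p =>
      2 * (pdx v p) ^ 3 * pdx (pdx (pdx v)) p / (pdx (pdx v) p) ^ 3
        - 3 * (pdx v p) ^ 2 / pdx (pdx v) p) :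
    ∀ p : ℝ × ℝ, pdt η p =
      (-2 * pdx v p / pdx (pdx v) p) * pdx η p
      + ((pdx v p) ^ 2 / (pdx (pdx v) p) ^ 2) * pdx (pdx η) p := by
  subst hη
  intro p
  have hb0 : pdx (pdx v) p ≠ 0 := hvxx p
  rw [F6 hv hvxx heq, F4 hv hvxx, F5 hv hvxx]
  field_simp
  ring
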